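/- For any c ≥ 1 there exists an initial point x^0 such that the iteration x^{k+1} = x^k - α_k f'(x^k) with α_0 = 1 and α_k = |x^k - x^{k-1}|/(c|f'(x^k) - f'(x^{k-1})|) for k ≥ 1 applied to f(x) = x²/2 on [-1,1] and f(x) = 2(|x| - log(1+|x|)) + 2log2 - 3/2 elsewhere produces a divergent sequence with |x^{2k}| → ∞. -/

import Mathlib

/-- The counterexample function from the paper: `x²/2` for `|x| ≤ 1` and
`2(|x| - log(1+|x|)) + 2 log 2 - 3/2` for `|x| > 1`. -/
noncomputable def badf (x : ℝ) : ℝ :=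
  if |x| ≤ 1 then x ^ 2 / 2
  else 2 * (|x| - Real.log (1 + |x|)) + 2 * Real.log 2 - 3 / 2

noncomputable def Gfun (x : ℝ) : ℝ := 2*x/(1+|x|)



lemma deriv_badf_pos {x : ℝ} (hx : 1 < x) : deriv badf x = 2 - 2/(1+x) := by
  have hx0 : (0:ℝ) < 1 + x := by linarith
  have heq : badf =ᶠ[nhds x] (fun y => 2*(y - Real.log (1+y)) + 2*Real.log 2 - 3/2) := by
    refine Filter.eventuallyEq_of_mem (isOpen_Ioi.mem_nhds hx) ?_
    intro y hy
    have hy1 : (1:ℝ) < y := hy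
    have : ¬ |y| ≤ 1 := by rw [abs_of_pos (by linarith)]; linarith
    simp only [badf, abs_of_pos (show (0:ℝ) < y by linarith)]
    rw [if_neg (by linarith)]
  have h0 : HasDerivAt (fun y : ℝ => 1 + y) 1 x := by
    simpa using (hasDerivAt_id x).const_add 1
  have hlog : HasDerivAt (fun y => Real.log (1+y)) (1/(1+x)) x := by
    have := (Real.hasDerivAt_log (ne_of_gt hx0)).comp x h0
    simpa [Function.comp_def] using this
  have hd : HasDerivAt (fun y => 2*(y - Real.log (1+y)) + 2*Real.log 2 - 3/2)
      (2*(1 - 1/(1+x))) x :=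
    ((((hasDerivAt_id x).sub hlog).const_mul 2).add_const (2*Real.log 2)).sub_const (3/2)
  rw [heq.deriv_eq, hd.deriv]; ring

lemma deriv_badf_neg {x : ℝ} (hx : x < -1) : deriv badf x = -2 + 2/(1-x) := by
  have hx0 : (0:ℝ) < 1 - x := by linarith
  have heq : badf =ᶠ[nhds x] (fun y => 2*(-y - Real.log (1-y)) + 2*Real.log 2 - 3/2) := by
    refine Filter.eventuallyEq_of_mem (isOpen_Iio.mem_nhds hx) ?_
    intro y hy
    have hy1 : y < -1 := hy
    have : ¬ |y| ≤ 1 := by rw [abs_of_neg (by linarith)]; linarith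
    simp only [badf, abs_of_neg (show y < 0 by linarith)]
    rw [if_neg (by linarith)]
    ring_nf
  have h0 : HasDerivAt (fun y : ℝ => 1 - y) (-1) x := by
    simpa using (hasDerivAt_id x).const_sub 1
  have hlog : HasDerivAt (fun y => Real.log (1-y)) ((1-x)⁻¹ * (-1)) x :=
    (Real.hasDerivAt_log (ne_of_gt hx0)).comp x h0
  have hd : HasDerivAt (fun y => 2*(-y - Real.log (1-y)) + 2*Real.log 2 - 3/2)
      (2*(-1 - (1-x)⁻¹ * (-1))) x :=
    ((((hasDerivAt_id x).neg.sub hlog).const_mul 2).add_const (2*Real.log 2)).sub_const (3/2)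
  rw [heq.deriv_eq, hd.deriv]
  field_simp
  ring

lemma deriv_badf_eq {x : ℝ} (hx : 1 < |x|) : deriv badf x = Gfun x := by
  rcases lt_abs.mp hx with h | h
  · rw [deriv_badf_pos h, Gfun, abs_of_pos (by linarith)]
    field_simp; ring
  · have hx' : x < -1 := by linarith
    rw [deriv_badf_neg hx', Gfun, abs_of_neg (by linarith)]
    have : (0:ℝ) < 1 - x := by linarith
    field_simp
    ring


lemma same_step {c p q : ℝ} (hc : 1 ≤ c) (hp : 1 < |p|) (hq : 1 < |q|)
    (hpq : 0 < p * q) (hne : p ≠ q) :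
    q - (|q - p| / (c * |Gfun q - Gfun p|)) * Gfun q = q * ((c - 1 - |p|)/c) := by
  have hc0 : (0:ℝ) < c := by linarith
  have hne' : q - p ≠ 0 := sub_ne_zero.mpr (Ne.symm hne)
  have habsne : |q - p| ≠ 0 := abs_ne_zero.mpr hne'
  have habspos : (0:ℝ) < |q - p| := abs_pos.mpr hne'
  rcases lt_or_gt_of_ne (fun h : p = 0 => by simp [h] at hpq) with hp0 | hp0
  · -- p < 0, hence q < 0
    have hq0 : q < 0 := by nlinarith
    have hp1 : p < -1 := by rw [abs_of_neg hp0] at hp; linarith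
    have hq1 : q < -1 := by rw [abs_of_neg hq0] at hq; linarith
    have hdp : (0:ℝ) < 1 - p := by linarith
    have hdq : (0:ℝ) < 1 - q := by linarith
    have hdp' : (1:ℝ) - p ≠ 0 := ne_of_gt hdp
    have hdq' : (1:ℝ) - q ≠ 0 := ne_of_gt hdq
    have hGd : Gfun q - Gfun p = 2*(q-p)/((1-p)*(1-q)) := by
      simp only [Gfun, abs_of_neg hp0, abs_of_neg hq0]
      rw [show (1:ℝ) + -p = 1 - p by ring, show (1:ℝ) + -q = 1 - q by ring]
      field_simp
      ring
    have habs : |Gfun q - Gfun p| = 2*|q-p|/((1-p)*(1-q)) := by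
      rw [hGd, abs_div, abs_mul, abs_two, abs_of_pos (mul_pos hdp hdq)]
    have hα : |q - p| / (c * (2*|q-p|/((1-p)*(1-q)))) = (1-p)*(1-q)/(2*c) := by
      field_simp
    rw [habs, hα]
    simp only [Gfun, abs_of_neg hq0, abs_of_neg hp0]
    rw [show (1:ℝ) + -q = 1 - q by ring]
    field_simp
    ring
  · -- p > 0, hence q > 0
    have hq0 : 0 < q := by nlinarith
    have hp1 : 1 < p := by rwa [abs_of_pos hp0] at hp
    have hq1 : 1 < q := by rwa [abs_of_pos hq0] at hq
    have hdp : (0:ℝ) < 1 + p := by linarith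
    have hdq : (0:ℝ) < 1 + q := by linarith
    have hdp' : (1:ℝ) + p ≠ 0 := ne_of_gt hdp
    have hdq' : (1:ℝ) + q ≠ 0 := ne_of_gt hdq
    have hGd : Gfun q - Gfun p = 2*(q-p)/((1+p)*(1+q)) := by
      simp only [Gfun, abs_of_pos hp0, abs_of_pos hq0]
      field_simp
      ring
    have habs : |Gfun q - Gfun p| = 2*|q-p|/((1+p)*(1+q)) := by
      rw [hGd, abs_div, abs_mul, abs_two, abs_of_pos (mul_pos hdp hdq)]
    have hα : |q - p| / (c * (2*|q-p|/((1+p)*(1+q)))) = (1+p)*(1+q)/(2*c) := by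
      field_simp
    rw [habs, hα]
    simp only [Gfun, abs_of_pos hq0, abs_of_pos hp0]
    field_simp
    ring

lemma opp_step {c p q : ℝ} (hc : 1 ≤ c) (hp3 : 3 ≤ |p|) (hq24 : 24 ≤ |q|)
    (hratio : 11 * |p| ≤ |q|) (hpq : p * q < 0) :
    ∃ t : ℝ, 0 < t ∧ t ≤ 2/3 ∧
      q - (|q - p| / (c * |Gfun q - Gfun p|)) * Gfun q = q * (1 - t) := by
  have hc0 : (0:ℝ) < c := by linarith
  have hcne : c ≠ 0 := ne_of_gt hc0
  have hp0 : p ≠ 0 := fun h => by simp [h] at hpq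
  have hq0 : q ≠ 0 := fun h => by simp [h] at hpq
  have ha0 : 0 < |p| := abs_pos.mpr hp0
  have hb0 : 0 < |q| := abs_pos.mpr hq0
  have hden : (0:ℝ) < |p| * (1 + |q|) + |q| * (1 + |p|) := by positivity
  refine ⟨(|p| + |q|) * (1 + |p|) / (c * (|p| * (1 + |q|) + |q| * (1 + |p|))), by positivity, ?_, ?_⟩
  · rw [div_le_iff₀ (by positivity)]
    have hcmul : |p| * (1 + |q|) + |q| * (1 + |p|) ≤ c*(|p| * (1 + |q|) + |q| * (1 + |p|)) :=
      le_mul_of_one_le_left hden.le hc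
    nlinarith [mul_nonneg (by linarith : (0:ℝ) ≤ |q| - 11*|p|) (by linarith : (0:ℝ) ≤ |p| - 1),
      mul_nonneg ha0.le (by linarith : (0:ℝ) ≤ 2*|p| - 3)]
  · rcases lt_or_gt_of_ne hq0 with hqn | hqp
    · -- q < 0, p > 0
      have hpp : 0 < p := by
        by_contra h
        push_neg at h
        nlinarith [mul_nonneg (neg_nonneg.mpr h) (neg_nonneg.mpr hqn.le)]
      rw [abs_of_neg hqn, abs_of_pos hpp]
      have h1q : (0:ℝ) < 1 - q := by linarith
      have h1p : (0:ℝ) < 1 + p := by linarith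
      have h1q' : (1:ℝ) - q ≠ 0 := ne_of_gt h1q
      have h1p' : (1:ℝ) + p ≠ 0 := ne_of_gt h1p
      have hposnum : (0:ℝ) < p*(1-q) - q*(1+p) := by nlinarith
      have hne2 : p*(1-q) - q*(1+p) ≠ 0 := ne_of_gt hposnum
      have hGd : Gfun q - Gfun p = 2*(q*(1+p) - p*(1-q))/((1+p)*(1-q)) := by
        simp only [Gfun, abs_of_neg hqn, abs_of_pos hpp]
        rw [show (1:ℝ) + -q = 1 - q by ring]
        rw [div_sub_div _ _ h1q' h1p', div_eq_div_iff (mul_ne_zero h1q' h1p')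
          (mul_ne_zero h1p' h1q')]
        ring
      have hneg : q*(1+p) - p*(1-q) < 0 := by nlinarith
      have habs : |Gfun q - Gfun p| = 2*(p*(1-q) - q*(1+p))/((1+p)*(1-q)) := by
        rw [hGd, abs_div, abs_mul, abs_two, abs_of_neg hneg,
          abs_of_pos (mul_pos h1p h1q)]
        ring
      have habs2 : |q - p| = p - q := by rw [abs_of_neg (by linarith : q - p < 0)]; ring
      have hα : (p - q) / (c * (2*(p*(1-q) - q*(1+p))/((1+p)*(1-q))))
          = (p-q)*((1+p)*(1-q))/(c*(2*(p*(1-q) - q*(1+p)))) := by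
        field_simp
      rw [habs2, habs, hα]
      simp only [Gfun, abs_of_neg hqn]
      rw [show (1:ℝ) + -q = 1 - q by ring]
      have hkey : q * ((p + -q) * (1 + p) / (c * (p * (1 - q) + -q * (1 + p))))
          = (p - q) * ((1 + p) * (1 - q)) / (c * (2 * (p * (1 - q) - q * (1 + p)))) * (2 * q / (1 - q)) := by
        rw [div_mul_div_comm, ← mul_div_assoc,
          div_eq_div_iff (by rw [show p * (1 - q) + -q * (1 + p) = p*(1-q) - q*(1+p) by ring]; positivity)
            (by positivity)]
        ring
      linear_combination hkey
    · -- q > 0, p < 0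
      have hpn : p < 0 := by
        by_contra h
        push_neg at h
        nlinarith [mul_nonneg h hqp.le]
      rw [abs_of_pos hqp, abs_of_neg hpn]
      have h1q : (0:ℝ) < 1 + q := by linarith
      have h1p : (0:ℝ) < 1 - p := by linarith
      have h1q' : (1:ℝ) + q ≠ 0 := ne_of_gt h1q
      have h1p' : (1:ℝ) - p ≠ 0 := ne_of_gt h1p
      have hposnum : (0:ℝ) < q*(1-p) - p*(1+q) := by nlinarith
      have hne2 : q*(1-p) - p*(1+q) ≠ 0 := ne_of_gt hposnum
      have hGd : Gfun q - Gfun p = 2*(q*(1-p) - p*(1+q))/((1-p)*(1+q)) := by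
        simp only [Gfun, abs_of_pos hqp, abs_of_neg hpn]
        rw [show (1:ℝ) + -p = 1 - p by ring]
        rw [div_sub_div _ _ h1q' h1p', div_eq_div_iff (mul_ne_zero h1q' h1p')
          (mul_ne_zero h1p' h1q')]
        ring
      have habs : |Gfun q - Gfun p| = 2*(q*(1-p) - p*(1+q))/((1-p)*(1+q)) := by
        rw [hGd, abs_of_pos (by positivity)]
      have habs2 : |q - p| = q - p := abs_of_pos (by linarith : (0:ℝ) < q - p)
      have hα : (q - p) / (c * (2*(q*(1-p) - p*(1+q))/((1-p)*(1+q))))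
          = (q-p)*((1-p)*(1+q))/(c*(2*(q*(1-p) - p*(1+q)))) := by
        field_simp
      rw [habs2, habs, hα]
      simp only [Gfun, abs_of_pos hqp]
      rw [show (1:ℝ) + -p = 1 - p by ring]
      have hkey : q * ((-p + q) * (1 + -p) / (c * (-p * (1 + q) + q * (1 - p))))
          = (q - p) * ((1 - p) * (1 + q)) / (c * (2 * (q * (1 - p) - p * (1 + q)))) * (2 * q / (1 + q)) := by
        rw [div_mul_div_comm, ← mul_div_assoc,
          div_eq_div_iff (by rw [show -p * (1 + q) + q * (1 - p) = q*(1-p) - p*(1+q) by ring]; positivity)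
            (by positivity)]
        ring
      linear_combination hkey


set_option maxHeartbeats 2000000 in
/-- Gradient descent with the pure local-curvature stepsize (no growth control)
diverges on `badf` for a suitable starting point. -/
theorem bad_gd_diverges :
    ∀ c : ℝ, 1 ≤ c → ∃ x0 : ℝ, ∀ x : ℕ → ℝ, ∀ α : ℕ → ℝ,
      x 0 = x0 → α 0 = 1 →
      (∀ k ≥ 1, α k = |x k - x (k - 1)| / (c * |deriv badf (x k) - deriv badf (x (k - 1))|)) →
      (∀ k, x (k + 1) = x k - α k * deriv badf (x k)) →
      Filter.Tendsto (fun k => |x (2 * k)|) Filter.atTop Filter.atTop := by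
  intro c hc
  refine ⟨21 * c, ?_⟩
  intro x α hx0 hα0 hα hrec
  have hc0 : (0:ℝ) < c := by linarith
  have hstep : ∀ m : ℕ, 1 < |x m| → 1 < |x (m+1)| →
      x (m+2) = x (m+1) - (|x (m+1) - x m| / (c * |Gfun (x (m+1)) - Gfun (x m)|)) * Gfun (x (m+1)) := by
    intro m h1 h2
    have h := hrec (m+1)
    rw [hα (m+1) (Nat.le_add_left 1 m)] at h
    simpa [Nat.add_sub_cancel, deriv_badf_eq h1, deriv_badf_eq h2] using h
  -- base facts
  have hx0p : (0:ℝ) < x 0 := by rw [hx0]; linarith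
  have hx0a : |x 0| = 21 * c := by rw [abs_of_pos hx0p, hx0]
  have hx0abs : 1 < |x 0| := by rw [hx0a]; linarith
  have hx1 : x 1 = x 0 - Gfun (x 0) := by
    rw [hrec 0, hα0, one_mul, deriv_badf_eq hx0abs]
  have hGx0 : Gfun (x 0) = 2 * (21 * c) / (1 + 21 * c) := by
    rw [Gfun, hx0, abs_of_pos (by linarith)]
  have hGb1 : 0 < 2 * (21 * c) / (1 + 21 * c) := by positivity
  have hGb2 : 2 * (21 * c) / (1 + 21 * c) < 2 := by
    rw [div_lt_iff₀ (by linarith)]; linarith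
  have hx1l : 21 * c - 2 < x 1 := by rw [hx1, hGx0, hx0]; linarith
  have hx1u : x 1 < 21 * c := by rw [hx1, hGx0, hx0]; linarith
  have hx1p : 0 < x 1 := by linarith
  have hx1a : |x 1| = x 1 := abs_of_pos hx1p
  -- main induction
  have main : ∀ k : ℕ,
      (0 < x (2*k) * x (2*k+1) ∧ 12*c ≤ |x (2*k)| ∧ |x (2*k)|/4 ≤ |x (2*k+1)| ∧
        |x (2*k+1)| < |x (2*k)|) ∧ 12*c*2^k ≤ |x (2*k)| := by
    intro k
    induction k with
    | zero =>
      norm_num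
      refine ⟨⟨mul_pos hx0p hx1p, ?_, ?_, ?_⟩, ?_⟩
      · rw [hx0a]; linarith
      · rw [hx0a, hx1a]; linarith
      · rw [hx0a, hx1a]; linarith
      · rw [hx0a]; linarith
    | succ n ih =>
      obtain ⟨⟨hpq, hu12, hv4, hvu⟩, hgrow⟩ := ih
      have hu1 : 1 < |x (2*n)| := by linarith
      have hv3 : 3 ≤ |x (2*n+1)| := by linarith
      have hv1 : 1 < |x (2*n+1)| := by linarith
      have hne : x (2*n) ≠ x (2*n+1) := by
        intro h; rw [h] at hvu; exact absurd hvu (lt_irrefl _)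
      -- fling
      have hfl : x (2*n+2) = x (2*n+1) * ((c - 1 - |x (2*n)|)/c) :=
        (hstep (2*n) hu1 hv1).trans (same_step hc hu1 hv1 hpq hne)
      have hF : (c - 1 - |x (2*n)|)/c ≤ -11 := by
        rw [div_le_iff₀ hc0]; linarith
      have hFneg : (c - 1 - |x (2*n)|)/c < 0 := lt_of_le_of_lt hF (by norm_num)
      have hFabs : 11 ≤ |(c - 1 - |x (2*n)|)/c| := by
        rw [abs_of_neg hFneg]; linarith
      have hw11 : 11 * |x (2*n+1)| ≤ |x (2*n+2)| := by
        rw [hfl, abs_mul]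
        nlinarith [abs_nonneg (x (2*n+1))]
      have hw24 : 24 ≤ |x (2*n+2)| := by nlinarith
      have hw12 : 12*c ≤ |x (2*n+2)| := by nlinarith
      have hwgrow : 2 * |x (2*n)| ≤ |x (2*n+2)| := by nlinarith
      have hw1 : 1 < |x (2*n+2)| := by linarith
      have hvw : x (2*n+1) * x (2*n+2) < 0 := by
        have hv0 : x (2*n+1) ≠ 0 := by
          intro h; rw [h, abs_zero] at hv3; linarith
        have heq : x (2*n+1) * x (2*n+2) = x (2*n+1)^2 * ((c - 1 - |x (2*n)|)/c) := by
          rw [hfl]; ring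
        rw [heq]
        exact mul_neg_of_pos_of_neg (by positivity) hFneg
      -- settle
      obtain ⟨t, ht0, ht23, hteq⟩ := opp_step hc hv3 hw24 hw11 hvw
      have hse : x (2*n+3) = x (2*n+2) * (1 - t) :=
        (hstep (2*n+1) hv1 hw1).trans hteq
      have h1t0 : 0 < 1 - t := by linarith
      have hseabs : |x (2*n+3)| = |x (2*n+2)| * (1 - t) := by
        rw [hse, abs_mul, abs_of_pos h1t0]
      have hidx : 2*(n+1) = 2*n+2 := by ring
      have hidx2 : 2*n+2+1 = 2*n+3 := by omega
      rw [hidx, hidx2]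
      refine ⟨⟨?_, hw12, ?_, ?_⟩, ?_⟩
      · have hw0 : x (2*n+2) ≠ 0 := by
          intro h; rw [h, abs_zero] at hw24; linarith
        have : x (2*n+2) * x (2*n+3) = x (2*n+2)^2 * (1 - t) := by rw [hse]; ring
        rw [this]
        positivity
      · rw [hseabs]; nlinarith [abs_nonneg (x (2*n+2))]
      · rw [hseabs]; nlinarith [abs_nonneg (x (2*n+2))]
      · rw [pow_succ]; nlinarith
  have hbnd : ∀ k, 12*c*2^k ≤ |x (2*k)| := fun k => (main k).2
  have ht : Filter.Tendsto (fun k : ℕ => 12*c*(2:ℝ)^k) Filter.atTop Filter.atTop :=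
    (tendsto_pow_atTop_atTop_of_one_lt one_lt_two).const_mul_atTop (by positivity)
  exact Filter.tendsto_atTop_mono hbnd ht
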